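/- Let G be a graph and A ⊆ V(G) a set closed under r-neighbour bootstrap percolation with |A| = ℓ. Then ℓ(δ(G) - ℓ + 1) ≤ e(A, A^c) ≤ (r-1)(n - ℓ), where n = |V(G)| and e(A, A^c) is the number of edges between A and its complement. -/

import Mathlib

open Finset

open scoped Classical

noncomputable section

variable {V : Type*}

/-- Number of neighbours of `v` inside the set `A`. -/
def nbrsIn (G : SimpleGraph V) (A : Finset V) (v : V) : ℕ :=
  (A.filter (fun u => G.Adj v u)).card

/-- One step of the `r`-neighbour bootstrap process. -/
def bootStep [Fintype V] (G : SimpleGraph V) (r : ℕ) (A : Finset V) : Finset V :=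
  A ∪ Finset.univ.filter (fun v => r ≤ nbrsIn G A v)

/-- The sets `A_t` of the `r`-neighbour bootstrap process started at `A`. -/
def bootSeq [Fintype V] (G : SimpleGraph V) (r : ℕ) (A : Finset V) : ℕ → Finset V
  | 0 => A
  | t + 1 => bootStep G r (bootSeq G r A t)

/-- `A` is closed under the `r`-neighbour bootstrap rule. -/
def BootClosed (G : SimpleGraph V) (r : ℕ) (A : Finset V) : Prop :=
  ∀ v, r ≤ nbrsIn G A v → v ∈ A

/-- The `r`-neighbour bootstrap closure `⟨A⟩_r`: the smallest closed superset of `A`. -/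
def bootClosure [Fintype V] (G : SimpleGraph V) (r : ℕ) (A : Finset V) : Finset V :=
  Finset.univ.filter (fun v => ∀ B : Finset V, A ⊆ B → BootClosed G r B → v ∈ B)

/-- `m(G, r)`: the minimum size of a percolating set. -/
def minPerc [Fintype V] (G : SimpleGraph V) (r : ℕ) : ℕ :=
  sInf {k | ∃ A : Finset V, A.card = k ∧ bootClosure G r A = Finset.univ}

end

theorem stmt_4 {V : Type*} [Fintype V] (G : SimpleGraph V) (r n ℓ : ℕ)
    (hn : Fintype.card V = n)
    (A : Finset V) (hclosed : BootClosed G r A) (hℓ : A.card = ℓ) :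
    (ℓ : ℤ) * ((G.minDegree : ℤ) - (ℓ : ℤ) + 1) ≤ ∑ x ∈ A, (nbrsIn G Aᶜ x : ℤ) ∧
    ∑ x ∈ A, (nbrsIn G Aᶜ x : ℤ) ≤ ((r : ℤ) - 1) * ((n : ℤ) - (ℓ : ℤ)) := by
  classical
  have hsplit : ∀ x : V, nbrsIn G A x + nbrsIn G Aᶜ x = G.degree x := by
    intro x
    rw [SimpleGraph.degree, nbrsIn, nbrsIn, ← Finset.card_union_of_disjoint
      (Finset.disjoint_filter_filter (disjoint_compl_right)),
      ← Finset.filter_union, Finset.union_compl, SimpleGraph.neighborFinset_eq_filter]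
  constructor
  · -- lower bound
    calc (ℓ : ℤ) * ((G.minDegree : ℤ) - (ℓ : ℤ) + 1)
        = ∑ _x ∈ A, ((G.minDegree : ℤ) - (ℓ : ℤ) + 1) := by
          rw [Finset.sum_const, hℓ]; ring
      _ ≤ ∑ x ∈ A, (nbrsIn G Aᶜ x : ℤ) := by
          apply Finset.sum_le_sum
          intro x hx
          have hdeg : G.minDegree ≤ G.degree x := G.minDegree_le_degree x
          have hA : nbrsIn G A x ≤ ℓ - 1 := by
            have : A.filter (fun u => G.Adj x u) ⊆ A.erase x := by
              intro u hu
              simp only [Finset.mem_filter] at hu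
              exact Finset.mem_erase.2 ⟨fun h => G.loopless.irrefl x (h ▸ hu.2), hu.1⟩
            calc nbrsIn G A x ≤ (A.erase x).card := Finset.card_le_card this
              _ = ℓ - 1 := by rw [Finset.card_erase_of_mem hx, hℓ]
          have hℓpos : 1 ≤ ℓ := by
            rw [← hℓ]; exact Finset.card_pos.2 ⟨x, hx⟩
          have hAz : (nbrsIn G A x : ℤ) ≤ (ℓ : ℤ) - 1 := by
            have := (Nat.cast_le (α := ℤ)).2 hA
            rwa [Nat.cast_sub hℓpos] at this
          have := hsplit x
          have hz : (nbrsIn G A x : ℤ) + (nbrsIn G Aᶜ x : ℤ) = (G.degree x : ℤ) := by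
            exact_mod_cast congrArg (Nat.cast (R := ℤ)) this
          have : (G.minDegree : ℤ) ≤ (G.degree x : ℤ) := by exact_mod_cast hdeg
          linarith
  · -- upper bound
    have hswap : ∑ x ∈ A, (nbrsIn G Aᶜ x : ℤ) = ∑ y ∈ Aᶜ, (nbrsIn G A y : ℤ) := by
      have : ∀ (B C : Finset V) (x : V), (nbrsIn G C x : ℤ) =
          ∑ y ∈ C, if G.Adj x y then (1 : ℤ) else 0 := by
        intro B C x
        rw [nbrsIn, Finset.sum_ite, Finset.sum_const, Finset.sum_const]
        simp
      calc ∑ x ∈ A, (nbrsIn G Aᶜ x : ℤ)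
          = ∑ x ∈ A, ∑ y ∈ Aᶜ, if G.Adj x y then (1 : ℤ) else 0 := by
            exact Finset.sum_congr rfl fun x _ => this A Aᶜ x
        _ = ∑ y ∈ Aᶜ, ∑ x ∈ A, if G.Adj x y then (1 : ℤ) else 0 := Finset.sum_comm
        _ = ∑ y ∈ Aᶜ, (nbrsIn G A y : ℤ) := by
            refine Finset.sum_congr rfl fun y _ => ?_
            rw [this Aᶜ A y]
            refine Finset.sum_congr rfl fun x _ => ?_
            simp [G.adj_comm]
    rw [hswap]
    have hcard : Aᶜ.card = n - ℓ := by
      rw [Finset.card_compl, hℓ, hn]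
    have hle : ℓ ≤ n := by rw [← hℓ, ← hn]; exact Finset.card_le_univ A
    calc ∑ y ∈ Aᶜ, (nbrsIn G A y : ℤ)
        ≤ ∑ _y ∈ Aᶜ, ((r : ℤ) - 1) := by
          apply Finset.sum_le_sum
          intro y hy
          have hy' : y ∉ A := Finset.mem_compl.1 hy
          have : nbrsIn G A y < r := by
            by_contra h
            exact hy' (hclosed y (le_of_not_gt h))
          have : (nbrsIn G A y : ℤ) < (r : ℤ) := by exact_mod_cast this
          linarith
      _ = ((r : ℤ) - 1) * ((n : ℤ) - (ℓ : ℤ)) := by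
          rw [Finset.sum_const, hcard, nsmul_eq_mul, Nat.cast_sub hle]
          ring
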